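/- The monoid M = Mon⟨a,b,c,d : ab=ba, cbad=1, cb²=1, a²d=1, cad=0, cbd=0, cd=1⟩ is 0-simple: for every nonzero w ∈ M, the two-sided ideal MwM equals M. -/

import Mathlib

inductive Letter | a | b | c | d | z
deriving DecidableEq

abbrev W := FreeMonoid Letter
def A : W := FreeMonoid.of .a
def B : W := FreeMonoid.of .b
def C : W := FreeMonoid.of .c
def D : W := FreeMonoid.of .d
def Z : W := FreeMonoid.of .z

/-- The defining relations of `M = Mon⟨a,b,c,d : ab=ba, cbad=1, cb²=1, a²d=1,
cad=0, cbd=0, cd=1⟩`, with the zero realized by the letter `z`. -/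
def relM : W → W → Prop := fun x y =>
  (x = A * B ∧ y = B * A) ∨
  (x = C * B * A * D ∧ y = 1) ∨ (x = C * B * B ∧ y = 1) ∨
  (x = A * A * D ∧ y = 1) ∨
  (x = C * A * D ∧ y = Z) ∨ (x = C * B * D ∧ y = Z) ∨ (x = C * D ∧ y = 1) ∨
  (∃ l : Letter, x = FreeMonoid.of l * Z ∧ y = Z) ∨
  (∃ l : Letter, x = Z * FreeMonoid.of l ∧ y = Z)

def Mcon : Con W := conGen relM

/-- The monoid `M = Mon⟨a,b,c,d : ab=ba, cbad=1, cb²=1, a²d=1, cad=0, cbd=0, cd=1⟩`. -/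
abbrev M := Mcon.Quotient

namespace Aux

/-! ### Basic congruence machinery on lists -/

def e : List Letter → W := FreeMonoid.ofList

def R (x y : List Letter) : Prop := Mcon (e x) (e y)

lemma Rof {x y : List Letter} (h : relM (e x) (e y)) : R x y :=
  ConGen.Rel.of _ _ h

lemma Rrefl (x : List Letter) : R x x := Mcon.refl _

lemma Rsymm {x y : List Letter} (h : R x y) : R y x := Mcon.symm h

lemma Rtrans {x y z : List Letter} (h : R x y) (h' : R y z) : R x z := Mcon.trans h h'

lemma Rappend {x y u v : List Letter} (h1 : R x y) (h2 : R u v) : R (x ++ u) (y ++ v) :=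
  Mcon.mul h1 h2

lemma Rctx {u u' : List Letter} (h : R u u') (x y : List Letter) :
    R (x ++ u ++ y) (x ++ u' ++ y) :=
  Rappend (Rappend (Rrefl x) h) (Rrefl y)

/-! ### The generating relations, in list form -/

lemma r_ab : R [.a, .b] [.b, .a] := Rof (Or.inl ⟨rfl, rfl⟩)
lemma r_cbad : R [.c, .b, .a, .d] [] := Rof (Or.inr (Or.inl ⟨rfl, rfl⟩))
lemma r_cbb : R [.c, .b, .b] [] := Rof (Or.inr (Or.inr (Or.inl ⟨rfl, rfl⟩)))
lemma r_aad : R [.a, .a, .d] [] := Rof (Or.inr (Or.inr (Or.inr (Or.inl ⟨rfl, rfl⟩))))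
lemma r_cad : R [.c, .a, .d] [.z] :=
  Rof (Or.inr (Or.inr (Or.inr (Or.inr (Or.inl ⟨rfl, rfl⟩)))))
lemma r_cbd : R [.c, .b, .d] [.z] :=
  Rof (Or.inr (Or.inr (Or.inr (Or.inr (Or.inr (Or.inl ⟨rfl, rfl⟩))))))
lemma r_cd : R [.c, .d] [] :=
  Rof (Or.inr (Or.inr (Or.inr (Or.inr (Or.inr (Or.inr (Or.inl ⟨rfl, rfl⟩)))))))
lemma r_lz (l : Letter) : R [l, .z] [.z] :=
  Rof (Or.inr (Or.inr (Or.inr (Or.inr (Or.inr (Or.inr (Or.inr (Or.inl ⟨l, rfl, rfl⟩))))))))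
lemma r_zl (l : Letter) : R [.z, l] [.z] :=
  Rof (Or.inr (Or.inr (Or.inr (Or.inr (Or.inr (Or.inr (Or.inr (Or.inr ⟨l, rfl, rfl⟩))))))))

/-- contexts for relations to the empty word, prefix form -/
lemma Rctx1 {u : List Letter} (h : R u []) (x : List Letter) : R (x ++ u) x := by
  have := Rappend (Rrefl x) h
  simpa using this

lemma Rctx2 {u : List Letter} (h : R u []) (y : List Letter) : R (u ++ y) y := by
  have := Rappend h (Rrefl y)
  simpa using this

/-! ### z absorbs everything -/

lemma z_right : ∀ s : List Letter, R (s ++ [.z]) [.z] := by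
  intro s
  induction s with
  | nil => exact Rrefl _
  | cons l t ih =>
    have h1 : R (l :: (t ++ [.z])) (l :: [.z]) := Rappend (Rrefl [l]) ih
    exact Rtrans h1 (r_lz l)

lemma z_left : ∀ s : List Letter, R (.z :: s) [.z] := by
  intro s
  induction s with
  | nil => exact Rrefl _
  | cons l t ih =>
    have h1 : R ([.z, l] ++ t) ([.z] ++ t) := Rappend (r_zl l) (Rrefl t)
    exact Rtrans h1 ih

lemma z_mem {w : List Letter} (h : Letter.z ∈ w) : R w [.z] := by
  obtain ⟨p, s, rfl⟩ := List.append_of_mem h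
  have h1 : R (p ++ .z :: s) (p ++ [.z]) := Rappend (Rrefl p) (z_left s)
  exact Rtrans h1 (z_right p)

/-! ### Irreducibility -/

structure Irr (w : List Letter) : Prop where
  hz : Letter.z ∉ w
  hab : ¬ [.a, .b] <:+: w
  hcd : ¬ [.c, .d] <:+: w
  haad : ¬ [.a, .a, .d] <:+: w
  hcbb : ¬ [.c, .b, .b] <:+: w
  hcbad : ¬ [.c, .b, .a, .d] <:+: w
  hcad : ¬ [.c, .a, .d] <:+: w
  hcbd : ¬ [.c, .b, .d] <:+: w

lemma eq_nil_or_append {α : Type*} (l : List α) : l = [] ∨ ∃ l' x, l = l' ++ [x] := by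
  rcases List.eq_nil_or_concat l with h | ⟨l', x, h⟩
  · exact Or.inl h
  · exact Or.inr ⟨l', x, by simpa [List.concat_eq_append] using h⟩

lemma first_d {w : List Letter} (h : Letter.d ∈ w) :
    ∃ p s, w = p ++ .d :: s ∧ Letter.d ∉ p := by
  induction w with
  | nil => simp at h
  | cons x t ih =>
    by_cases hx : x = Letter.d
    · exact ⟨[], t, by simp [hx], by simp⟩
    · have ht : Letter.d ∈ t := by
        rcases List.mem_cons.1 h with h' | h'
        · exact absurd h'.symm hx
        · exact h'
      obtain ⟨p, s, rfl, hp⟩ := ih ht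
      refine ⟨x :: p, s, rfl, ?_⟩
      intro hmem
      rcases List.mem_cons.1 hmem with h' | h'
      · exact hx h'.symm
      · exact hp h'

/-- b-runs: if `q ++ b :: s` is irreducible and the shown `b` is "protected"
on the right, then `q` is a run of `b`'s or contains a `d`. -/
lemma brun : ∀ n q (s : List Letter), q.length ≤ n → Irr (q ++ .b :: s) →
    ((s = [] ∧ ¬ [.c, .b] <:+ (q ++ [.b])) ∨ s.head? = some .b ∨ s.head? = some .d ∨
      [.a, .d] <+: s) →
    (∃ k, q = List.replicate k Letter.b) ∨ Letter.d ∈ q := by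
  intro n
  induction n with
  | zero =>
    intro q s hq _ _
    rw [Nat.le_zero, List.length_eq_zero_iff] at hq
    subst hq
    exact Or.inl ⟨0, rfl⟩
  | succ n ih =>
    intro q s hq hirr hcond
    rcases eq_nil_or_append q with rfl | ⟨q', x, rfl⟩
    · exact Or.inl ⟨0, rfl⟩
    cases x with
    | z => exact absurd (by simp) hirr.hz
    | d => exact Or.inr (by simp)
    | a => exact absurd ⟨q', s, by simp⟩ hirr.hab
    | c =>
      rcases hcond with ⟨rfl, hsuf⟩ | hb | hd | had
      · exact absurd ⟨q', by simp⟩ hsuf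
      · cases s with
        | nil => simp at hb
        | cons y s' =>
          simp only [List.head?_cons, Option.some.injEq] at hb
          subst hb
          exact absurd ⟨q', s', by simp⟩ hirr.hcbb
      · cases s with
        | nil => simp at hd
        | cons y s' =>
          simp only [List.head?_cons, Option.some.injEq] at hd
          subst hd
          exact absurd ⟨q', s', by simp⟩ hirr.hcbd
      · obtain ⟨t, rfl⟩ := had
        exact absurd ⟨q', t, by simp⟩ hirr.hcbad
    | b =>
      have hq' : q'.length ≤ n := by
        simp only [List.length_append, List.length_cons, List.length_nil] at hq
        omega
      have hw : q' ++ [Letter.b] ++ .b :: s = q' ++ .b :: (.b :: s) := by simp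
      have hirr' : Irr (q' ++ .b :: (.b :: s)) := by rwa [hw] at hirr
      rcases ih q' (.b :: s) hq' hirr' (Or.inr (Or.inl rfl)) with ⟨k, rfl⟩ | hd
      · exact Or.inl ⟨k + 1, by rw [List.replicate_succ']⟩
      · exact Or.inr (by simp [hd])

lemma head?_repl_b (k : ℕ) (t : List Letter) :
    (List.replicate k Letter.b ++ (.b :: t)).head? = some Letter.b := by
  cases k <;> simp [List.replicate_succ]

/-- the first `d` in an irreducible stuck word leads to a contradiction -/
lemma firstd (p s : List Letter) (hirr : Irr (p ++ .d :: s)) (hdp : Letter.d ∉ p)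
    (hne : p ≠ []) (hph : p.head? = some .a ∨ p.head? = some .c)
    (had : ¬ [.a, .d] <+: (p ++ .d :: s)) : False := by
  rcases eq_nil_or_append p with rfl | ⟨q, x, rfl⟩
  · exact hne rfl
  cases x with
  | z => exact absurd (by simp) hirr.hz
  | d => exact hdp (by simp)
  | c => exact absurd ⟨q, s, by simp⟩ hirr.hcd
  | b =>
    have hw : q ++ [Letter.b] ++ .d :: s = q ++ .b :: (.d :: s) := by simp
    have hirr' : Irr (q ++ .b :: (.d :: s)) := by rwa [hw] at hirr
    rcases brun q.length q (.d :: s) le_rfl hirr' (Or.inr (Or.inr (Or.inl rfl))) with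
      ⟨k, rfl⟩ | hd
    · have : (List.replicate k Letter.b ++ [Letter.b]).head? = some Letter.b :=
        head?_repl_b k []
      rcases hph with h | h <;> rw [this] at h <;> simp at h
    · exact hdp (by simp [hd])
  | a =>
    rcases eq_nil_or_append q with rfl | ⟨q', y, rfl⟩
    · exact had ⟨s, by simp⟩
    cases y with
    | z => exact absurd (by simp) hirr.hz
    | d => exact hdp (by simp)
    | a => exact absurd ⟨q', s, by simp⟩ hirr.haad
    | c => exact absurd ⟨q', s, by simp⟩ hirr.hcad
    | b =>
      have hw : q' ++ [Letter.b] ++ [Letter.a] ++ .d :: s = q' ++ .b :: (.a :: .d :: s) := by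
        simp
      have hirr' : Irr (q' ++ .b :: (.a :: .d :: s)) := by rwa [hw] at hirr
      rcases brun q'.length q' (.a :: .d :: s) le_rfl hirr'
          (Or.inr (Or.inr (Or.inr ⟨s, rfl⟩))) with ⟨k, rfl⟩ | hd
      · have heq : List.replicate k Letter.b ++ [Letter.b] ++ [Letter.a]
            = List.replicate k Letter.b ++ (.b :: [Letter.a]) := by simp
        have : (List.replicate k Letter.b ++ [Letter.b] ++ [Letter.a]).head? = some Letter.b := by
          rw [heq]; exact head?_repl_b k [.a]
        rcases hph with h | h <;> rw [this] at h <;> simp at h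
      · exact hdp (by simp [hd])

lemma head?_append_left {p : List Letter} (t : List Letter) (h : p ≠ []) :
    (p ++ t).head? = p.head? := by
  cases p with
  | nil => exact absurd rfl h
  | cons x p' => simp

/-- No irreducible word can be "stuck": start with a or c (not `ad`),
end with d, or with b not preceded by c. -/
lemma nostuck (w : List Letter) (hirr : Irr w)
    (hhead : w.head? = some .a ∨ w.head? = some .c)
    (had : ¬ [.a, .d] <+: w)
    (hend : (∃ v, w = v ++ [.d]) ∨ ((∃ v, w = v ++ [.b]) ∧ ¬ [.c, .b] <:+ w)) : False := by
  have key : Letter.d ∈ w → False := by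
    intro hd
    obtain ⟨p, s, hw, hdp⟩ := first_d hd
    have hne : p ≠ [] := by
      rintro rfl
      simp only [List.nil_append] at hw
      rw [hw] at hhead
      simp at hhead
    have hph : p.head? = some .a ∨ p.head? = some .c := by
      rw [hw, head?_append_left _ hne] at hhead
      exact hhead
    rw [hw] at hirr had
    exact firstd p s hirr hdp hne hph had
  rcases hend with ⟨v, rfl⟩ | ⟨⟨v, rfl⟩, hsuf⟩
  · exact key (by simp)
  · have hw : v ++ [Letter.b] = v ++ .b :: [] := by simp
    have hirr' : Irr (v ++ .b :: ([] : List Letter)) := by rwa [hw] at hirr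
    rcases brun v.length v [] le_rfl hirr' (Or.inl ⟨rfl, hsuf⟩) with ⟨k, rfl⟩ | hd
    · have : (List.replicate k Letter.b ++ [Letter.b]).head? = some Letter.b :=
        head?_repl_b k []
      rcases hhead with h | h <;> rw [this] at h <;> simp at h
    · exact key (by simp [hd])

/-! ### The inversion count -/

def inv : List Letter → ℕ
  | [] => 0
  | x :: t => (if x = Letter.a then t.count Letter.b else 0) + inv t

lemma inv_append (u v : List Letter) :
    inv (u ++ v) = inv u + inv v + u.count Letter.a * v.count Letter.b := by
  induction u with
  | nil => simp [inv]
  | cons x u ih =>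
    by_cases hx : x = Letter.a <;>
      simp [inv, hx, ih, List.count_append, List.count_cons] <;> ring

lemma inv_swap (x y : List Letter) :
    inv (x ++ [.a, .b] ++ y) = inv (x ++ [.b, .a] ++ y) + 1 := by
  rw [List.append_assoc, List.append_assoc, inv_append, inv_append,
    inv_append, inv_append]
  simp [inv, List.count_cons]
  ring

/-! ### The main dichotomy -/

def Qp (w : List Letter) : Prop := R w [.z] ∨ ∃ u v, R (u ++ w ++ v) []

lemma Qp_of_rel {w w' : List Letter} (h : R w w') (hq : Qp w') : Qp w := by
  rcases hq with h0 | ⟨u, v, h1⟩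
  · exact Or.inl (Rtrans h h0)
  · exact Or.inr ⟨u, v, Rtrans (Rctx h u v) h1⟩

lemma strip_suffix {v : List Letter} (tl ext : List Letter)
    (hrel : R (v ++ tl ++ ext) v) (h : Qp v) : Qp (v ++ tl) := by
  rcases h with h0 | ⟨u0, v0, h1⟩
  · exact Or.inl (Rtrans (Rappend h0 (Rrefl tl)) (z_left tl))
  · refine Or.inr ⟨u0, ext ++ v0, ?_⟩
    have heq : u0 ++ (v ++ tl) ++ (ext ++ v0) = u0 ++ (v ++ tl ++ ext) ++ v0 := by simp
    rw [heq]
    exact Rtrans (Rctx hrel u0 v0) h1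

lemma strip_prefix {v : List Letter} (hd pre : List Letter)
    (hrel : R (pre ++ (hd ++ v)) v) (h : Qp v) : Qp (hd ++ v) := by
  rcases h with h0 | ⟨u0, v0, h1⟩
  · exact Or.inl (Rtrans (Rappend (Rrefl hd) h0) (z_right hd))
  · refine Or.inr ⟨u0 ++ pre, v0, ?_⟩
    have heq : u0 ++ pre ++ (hd ++ v) ++ v0 = u0 ++ (pre ++ (hd ++ v)) ++ v0 := by simp
    rw [heq]
    exact Rtrans (Rctx hrel u0 v0) h1

/-- Splitting on the head of a word that ends suitably. -/
lemma head_split (w : List Letter) (hirr : Irr w)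
    (hend : (∃ v, w = v ++ [.d]) ∨ (∃ v y, w = v ++ [y, .b] ∧ (y = .b ∨ y = .d))) :
    (∃ t, w = .b :: t) ∨ (∃ t, w = .d :: t) ∨ (∃ t, w = .a :: .d :: t) := by
  have hwne : w ≠ [] := by
    rcases hend with ⟨v, rfl⟩ | ⟨v, y, rfl, _⟩ <;> simp
  have hend' : (∃ v, w = v ++ [.d]) ∨ ((∃ v, w = v ++ [.b]) ∧ ¬ [.c, .b] <:+ w) := by
    rcases hend with h | ⟨v, y, rfl, hy⟩
    · exact Or.inl h
    · refine Or.inr ⟨⟨v ++ [y], by simp⟩, ?_⟩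
      rintro ⟨r, hr⟩
      have := congrArg List.reverse hr
      simp only [List.reverse_append] at this
      simp at this
      obtain ⟨h1, -⟩ := this
      rcases hy with rfl | rfl <;> simp at h1
  cases w with
  | nil => exact absurd rfl hwne
  | cons f t =>
    cases f with
    | z => exact absurd (by simp) hirr.hz
    | b => exact Or.inl ⟨t, rfl⟩
    | d => exact Or.inr (Or.inl ⟨t, rfl⟩)
    | c =>
      exfalso
      refine nostuck _ hirr (Or.inr rfl) ?_ hend'
      rintro ⟨r, hr⟩
      simp at hr
    | a =>
      cases t with
      | nil =>
        exfalso
        rcases hend with ⟨v, hv⟩ | ⟨v, y, hv, _⟩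
        · rcases eq_nil_or_append v with rfl | ⟨v', x, rfl⟩
          · simp at hv
          · have := congrArg List.length hv
            simp [List.length_append] at this
        · rcases eq_nil_or_append v with rfl | ⟨v', x, rfl⟩
          · simp at hv
          · have := congrArg List.length hv
            simp [List.length_append] at this
      | cons f' t' =>
        cases f' with
        | z => exact absurd (by simp) hirr.hz
        | d => exact Or.inr (Or.inr ⟨t', rfl⟩)
        | b => exact absurd ⟨[], t', by simp⟩ hirr.hab
        | a =>
          exfalso
          refine nostuck _ hirr (Or.inl rfl) ?_ hend'
          rintro ⟨r, hr⟩
          simp at hr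
        | c =>
          exfalso
          refine nostuck _ hirr (Or.inl rfl) ?_ hend'
          rintro ⟨r, hr⟩
          simp at hr

lemma main : ∀ n, ∀ i, ∀ w : List Letter, w.length ≤ n → inv w ≤ i → Qp w := by
  intro n
  induction n using Nat.strong_induction_on with
  | _ n ihn =>
  intro i
  induction i using Nat.strong_induction_on with
  | _ i ihi =>
  intro w hn hi
  by_cases hz : Letter.z ∈ w
  · exact Or.inl (z_mem hz)
  by_cases hcad : [.c, .a, .d] <:+: w
  · obtain ⟨x, y, rfl⟩ := hcad
    refine Or.inl (Rtrans (Rctx r_cad x y) ?_)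
    exact z_mem (by simp)
  by_cases hcbd : [.c, .b, .d] <:+: w
  · obtain ⟨x, y, rfl⟩ := hcbd
    refine Or.inl (Rtrans (Rctx r_cbd x y) ?_)
    exact z_mem (by simp)
  by_cases hab : [.a, .b] <:+: w
  · obtain ⟨x, y, rfl⟩ := hab
    have hrel : R (x ++ [.a, .b] ++ y) (x ++ [.b, .a] ++ y) := Rctx r_ab x y
    refine Qp_of_rel hrel (ihi (inv (x ++ [.b, .a] ++ y)) ?_ _ ?_ le_rfl)
    · have := inv_swap x y; omega
    · simpa using hn
  have reduce : ∀ p : List Letter, R p [] → p ≠ [] → ∀ x y : List Letter,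
      w = x ++ p ++ y → Qp w := by
    intro p hp hne x y hw
    subst hw
    have hrel : R (x ++ p ++ y) (x ++ [] ++ y) := Rctx hp x y
    refine Qp_of_rel hrel (ihn (x ++ [] ++ y).length ?_ (inv (x ++ [] ++ y)) _ le_rfl le_rfl)
    have hplen : 0 < p.length := List.length_pos_iff.2 hne
    simp only [List.length_append, List.length_nil] at *
    omega
  by_cases hcd : [.c, .d] <:+: w
  · obtain ⟨x, y, hw⟩ := hcd
    exact reduce _ r_cd (by simp) x y hw.symm
  by_cases haad : [.a, .a, .d] <:+: w
  · obtain ⟨x, y, hw⟩ := haad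
    exact reduce _ r_aad (by simp) x y hw.symm
  by_cases hcbb : [.c, .b, .b] <:+: w
  · obtain ⟨x, y, hw⟩ := hcbb
    exact reduce _ r_cbb (by simp) x y hw.symm
  by_cases hcbad : [.c, .b, .a, .d] <:+: w
  · obtain ⟨x, y, hw⟩ := hcbad
    exact reduce _ r_cbad (by simp) x y hw.symm
  have hirr : Irr w := ⟨hz, hab, hcd, haad, hcbb, hcbad, hcad, hcbd⟩
  -- IH for shorter words:
  have IHlen : ∀ w' : List Letter, w'.length < w.length → Qp w' := by
    intro w' hlt
    exact ihn w'.length (lt_of_lt_of_le hlt hn) (inv w') w' le_rfl le_rfl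
  rcases eq_nil_or_append w with rfl | ⟨v, x, rfl⟩
  · exact Or.inr ⟨[], [], by simpa using Rrefl ([] : List Letter)⟩
  -- helper for the head-analysis branches
  have headcase : (∃ vv, v ++ [x] = vv ++ [Letter.d]) ∨
      (∃ vv y, v ++ [x] = vv ++ [y, Letter.b] ∧ (y = .b ∨ y = .d)) → Qp (v ++ [x]) := by
    intro hend
    rcases head_split (v ++ [x]) hirr hend with ⟨t, ht⟩ | ⟨t, ht⟩ | ⟨t, ht⟩
    · rw [ht]
      have hrel : R ([.c, .b] ++ ([Letter.b] ++ t)) t := by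
        have := Rctx2 r_cbb t
        simpa using this
      refine strip_prefix [Letter.b] [.c, .b] hrel (IHlen t ?_)
      rw [ht]; simp only [List.length_cons]; omega
    · rw [ht]
      have hrel : R ([.c] ++ ([Letter.d] ++ t)) t := by
        have := Rctx2 r_cd t
        simpa using this
      refine strip_prefix [Letter.d] [.c] hrel (IHlen t ?_)
      rw [ht]; simp only [List.length_cons]; omega
    · rw [ht]
      have hrel : R ([.c, .b] ++ ([Letter.a, Letter.d] ++ t)) t := by
        have := Rctx2 r_cbad t
        simpa using this
      refine strip_prefix [Letter.a, Letter.d] [.c, .b] hrel (IHlen t ?_)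
      rw [ht]; simp only [List.length_cons]; omega
  cases x with
  | z => exact absurd (by simp) hz
  | a =>
    have hrel : R (v ++ [Letter.a] ++ [.a, .d]) v := by
      have := Rctx1 r_aad v
      simpa using this
    exact strip_suffix [Letter.a] [.a, .d] hrel (IHlen v (by simp))
  | c =>
    have hrel : R (v ++ [Letter.c] ++ [.d]) v := by
      have := Rctx1 r_cd v
      simpa using this
    exact strip_suffix [Letter.c] [.d] hrel (IHlen v (by simp))
  | d => exact headcase (Or.inl ⟨v, rfl⟩)
  | b =>
    rcases eq_nil_or_append v with rfl | ⟨v', y, rfl⟩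
    · refine Or.inr ⟨[.c, .b], [], ?_⟩
      have h0 : ([.c, .b] ++ ([] ++ [Letter.b]) ++ [] : List Letter) = [.c, .b, .b] := by simp
      rw [h0]
      exact r_cbb
    cases y with
    | z => exact absurd (by simp) hz
    | a => exact absurd ⟨v', [], by simp⟩ hab
    | c =>
      have hrel : R (v' ++ [.c, .b] ++ [.a, .d]) v' := by
        have := Rctx1 r_cbad v'
        simpa using this
      have h1 : Qp (v' ++ [.c, .b]) :=
        strip_suffix [.c, .b] [.a, .d] hrel (IHlen v' (by simp))
      have heq : v' ++ [Letter.c] ++ [Letter.b] = v' ++ [.c, .b] := by simp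
      rwa [heq]
    | b => exact headcase (Or.inr ⟨v', .b, by simp, Or.inl rfl⟩)
    | d => exact headcase (Or.inr ⟨v', .d, by simp, Or.inr rfl⟩)

/-! ### The model, for separating z from 1 -/

def La : List Letter → List Letter
  | [] => [.a]
  | .b :: t => .b :: La t
  | .a :: .d :: t => t
  | x :: t => .a :: x :: t

def Lc : List Letter → Option (List Letter)
  | .d :: t => some t
  | .b :: .b :: t => some t
  | .b :: .a :: .d :: t => some t
  | .a :: .d :: _ => none
  | .b :: .d :: _ => none
  | w => some (.c :: w)

def f : Letter → Function.End (Option (List Letter))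
  | .a => fun s => s.map La
  | .b => fun s => s.map (.b :: ·)
  | .d => fun s => s.map (.d :: ·)
  | .c => fun s => s.bind Lc
  | .z => fun _ => none

def phi : W →* Function.End (Option (List Letter)) := FreeMonoid.lift f

lemma hker : Mcon ≤ Con.ker phi := by
  apply Con.conGen_le.2
  rintro x y (⟨rfl, rfl⟩ | ⟨rfl, rfl⟩ | ⟨rfl, rfl⟩ | ⟨rfl, rfl⟩ | ⟨rfl, rfl⟩ | ⟨rfl, rfl⟩ |
    ⟨rfl, rfl⟩ | ⟨l, rfl, rfl⟩ | ⟨l, rfl, rfl⟩) <;>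
    refine (Con.ker_rel _).2 ?_ <;>
    simp only [A, B, C, D, Z, map_mul, map_one, FreeMonoid.lift_eval_of] <;>
    funext s <;> rcases s with - | w
  · rfl
  · rfl
  · rfl
  · rfl
  · rfl
  · rfl
  · rfl
  · rfl
  · rfl
  · rfl
  · rfl
  · rfl
  · rfl
  · rfl
  · cases l <;> rfl
  · cases l <;> rfl
  · cases l <;> rfl
  · cases l <;> rfl

lemma z_ne_one : ¬ Mcon Z 1 := by
  intro h
  have h2 : phi Z = phi 1 := (Con.ker_rel _).1 (hker h)
  have h3 := congrFun h2 (some [])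
  simp only [map_one] at h3
  have : (none : Option (List Letter)) = some [] := h3
  simp at this

end Aux

/-- `M` is `0`-simple: it is nontrivial and for every nonzero `w` the
two-sided ideal `M w M` is all of `M`. -/
theorem stmt14 :
    (Z : M) ≠ 1 ∧ ∀ w : M, w ≠ (Z : M) → ∀ x : M, ∃ u v : M, u * w * v = x := by
  constructor
  · intro h
    rw [← Con.coe_one] at h
    exact Aux.z_ne_one (Mcon.eq.1 h)
  · intro w hw x
    induction w using Con.induction_on with
    | H w' =>
    induction x using Con.induction_on with
    | H x' =>
    have hel : Aux.e (FreeMonoid.toList w') = w' := rfl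
    rcases Aux.main (FreeMonoid.toList w').length (Aux.inv (FreeMonoid.toList w'))
        (FreeMonoid.toList w') le_rfl le_rfl with h0 | ⟨u, v, h1⟩
    · exfalso
      apply hw
      have : Mcon w' Z := h0
      exact Mcon.eq.2 this
    · refine ⟨(Aux.e u : M), ((Aux.e v * x' : W) : M), ?_⟩
      have h2 : Mcon (Aux.e u * w' * Aux.e v) 1 := h1
      have h3 : Mcon (Aux.e u * w' * (Aux.e v * x')) x' := by
        have h4 := Mcon.mul h2 (Mcon.refl x')
        rw [one_mul] at h4
        rw [← mul_assoc]
        exact h4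
      calc (↑(Aux.e u) : M) * ↑w' * ↑(Aux.e v * x')
          = ↑(Aux.e u * w' * (Aux.e v * x')) := by simp [Con.coe_mul]
        _ = ↑x' := Mcon.eq.2 h3
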